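/- The dual Cauchy-type identity holds: H(t,τ̄,τ̲)·E(-t,-τ̄,-τ̲) = 1, where H(t,τ̄,τ̲) = Πᵢ 1/(1-(txᵢ+τ̄φᵢ+τ̲θᵢ)) and E(t,τ̄,τ̲) = Πᵢ (1+txᵢ+τ̄φᵢ+τ̲θᵢ). In particular, at the level of coefficients, Σ_{r=0}^{n}(-1)^r (e̿ᵣ h_{n-r} - h̄_{n-r} e̲ᵣ - ēᵣ h̲_{n-r} + eᵣ h̿_{n-r}) = 0 for all n ≥ 0. -/

import Mathlib

open MvPolynomial

variable {N : ℕ} {R : Type*}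

/-- The complete homogeneous symmetric polynomial `hₙ`. -/
noncomputable def hPoly (N n : ℕ) : MvPolynomial (Fin N) ℤ :=
  ∑ m ∈ (Finset.univ : Finset (Fin N)).sym n, ((m : Multiset (Fin N)).map MvPolynomial.X).prod

/-- The elementary symmetric polynomial `eₙ`. -/
noncomputable def ePoly (N n : ℕ) : MvPolynomial (Fin N) ℤ :=
  MvPolynomial.esymm (Fin N) ℤ n

section
variable [Ring R] [Algebra (MvPolynomial (Fin N) ℤ) R]

/-- Lift of a polynomial in the `x`'s to `R`. -/
noncomputable def lift' (f : MvPolynomial (Fin N) ℤ) : R :=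
  algebraMap (MvPolynomial (Fin N) ℤ) R f

/-- `⟪d̄ f⟫ = Σᵢ φᵢ ∂ᵢ f` for a family `φ` of odd variables. -/
noncomputable def dOdd (φ : Fin N → R) (f : MvPolynomial (Fin N) ℤ) : R :=
  ∑ i, φ i * lift' (MvPolynomial.pderiv i f)

/-- `⟪d̄ d̲ f⟫ = Σ_{i,j} φᵢ θⱼ ∂ᵢ∂ⱼ f`. -/
noncomputable def dOdd2 (φ θ : Fin N → R) (f : MvPolynomial (Fin N) ℤ) : R :=
  ∑ i, ∑ j, φ i * θ j * lift' (MvPolynomial.pderiv i (MvPolynomial.pderiv j f))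

end

noncomputable abbrev SR (N : ℕ) := MvPolynomial (Fin N) ℤ

noncomputable def geo (x : SR N) : PowerSeries (SR N) := PowerSeries.mk fun k => x ^ k

lemma one_sub_mul_geo (x : SR N) :
    (1 - PowerSeries.C x * PowerSeries.X) * geo x = 1 := by
  ext k
  rw [sub_mul, one_mul, mul_assoc]
  cases k with
  | zero => simp [geo]
  | succ n =>
    simp [geo, PowerSeries.coeff_C_mul, PowerSeries.coeff_succ_X_mul, pow_succ, mul_comm]

lemma coeff_prod_one_sub {A : Type*} [CommRing A] {σ : Type*} [DecidableEq σ]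
    (y : σ → A) (s : Finset σ) (k : ℕ) :
    PowerSeries.coeff k (∏ i ∈ s, (1 - PowerSeries.C (y i) * PowerSeries.X)) =
      (-1) ^ k * ∑ t ∈ s.powersetCard k, ∏ i ∈ t, y i := by
  induction s using Finset.induction generalizing k with
  | empty =>
    cases k with
    | zero => simp
    | succ m =>
      rw [Finset.powersetCard_eq_empty.2 (by simp)]
      simp [PowerSeries.coeff_one]
  | insert a s ha ih =>
    rw [Finset.prod_insert ha, sub_mul, one_mul, mul_assoc, map_sub]
    cases k with
    | zero =>
      have : PowerSeries.coeff 0 (PowerSeries.C (y a) *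
          (PowerSeries.X * ∏ i ∈ s, (1 - PowerSeries.C (y i) * PowerSeries.X))) = 0 := by
        simp [PowerSeries.coeff_zero_eq_constantCoeff, map_mul]
      rw [this, sub_zero, ih]
      simp
    | succ m =>
      rw [PowerSeries.coeff_C_mul, PowerSeries.coeff_succ_X_mul, ih, ih,
        Finset.powersetCard_succ_insert ha, Finset.sum_union, Finset.sum_image]
      · have h1 : ∀ t ∈ s.powersetCard m, ∏ i ∈ insert a t, y i = y a * ∏ i ∈ t, y i := by
          intro t ht
          exact Finset.prod_insert fun h => ha ((Finset.mem_powersetCard.1 ht).1 h)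
        rw [Finset.sum_congr rfl h1, ← Finset.mul_sum]
        ring
      · intro t ht u hu h
        have hta : a ∉ t := fun h' => ha ((Finset.mem_powersetCard.1 ht).1 h')
        have hua : a ∉ u := fun h' => ha ((Finset.mem_powersetCard.1 hu).1 h')
        rw [← Finset.erase_insert hta, ← Finset.erase_insert hua, h]
      · rw [Finset.disjoint_left]
        intro t ht ht'
        obtain ⟨u, hu, rfl⟩ := Finset.mem_image.1 ht'
        exact ha ((Finset.mem_powersetCard.1 ht).1 (Finset.mem_insert_self a u))

lemma sum_eq_card_toMultiset (l : Fin N →₀ ℕ) :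
    ∑ i, l i = Multiset.card (Finsupp.toMultiset l) := by
  rw [Finsupp.card_toMultiset, Finsupp.sum_fintype]
  · rfl
  · intro i; rfl

lemma coeff_prod_geo (k : ℕ) :
    PowerSeries.coeff k (∏ i : Fin N, geo (MvPolynomial.X i)) = hPoly N k := by
  rw [PowerSeries.coeff_prod]
  simp only [geo, PowerSeries.coeff_mk]
  rw [hPoly]
  refine Finset.sum_bij' (fun l hl => ⟨Finsupp.toMultiset l, by
      rw [← sum_eq_card_toMultiset]
      exact (Finset.mem_finsuppAntidiag.1 hl).1⟩)
    (fun m _ => Multiset.toFinsupp m.1) ?_ ?_ ?_ ?_ ?_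
  · intro l hl
    exact Finset.mem_sym_iff.2 fun a _ => Finset.mem_univ a
  · intro m hm
    rw [Finset.mem_finsuppAntidiag]
    refine ⟨?_, Finset.subset_univ _⟩
    have : Finset.univ.sum (Multiset.toFinsupp m.1) = ∑ i, Multiset.toFinsupp m.1 i := rfl
    rw [this, sum_eq_card_toMultiset, Multiset.toFinsupp_toMultiset, m.2]
  · intro l hl
    exact Finsupp.toMultiset_toFinsupp l
  · intro m hm
    exact Subtype.ext (Multiset.toFinsupp_toMultiset m.1)
  · intro l hl
    show _ = ((Finsupp.toMultiset l : Multiset (Fin N)).map MvPolynomial.X).prod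
    rw [Finset.prod_multiset_map_count]
    simp only [Finsupp.count_toMultiset]
    refine Eq.symm (Finset.prod_subset (Finset.subset_univ _) fun x _ hx => ?_)
    have hx0 : l x = 0 := by
      rw [← Finsupp.count_toMultiset]
      exact Multiset.count_eq_zero_of_notMem fun h => hx (Multiset.mem_toFinset.2 h)
    rw [hx0, pow_zero]

lemma esymm_eq (k : ℕ) :
    ePoly N k = ∑ t ∈ Finset.powersetCard k Finset.univ, ∏ i ∈ t, MvPolynomial.X i := rfl

lemma lemA (m : ℕ) (hm : m ≠ 0) :
    ∑ r ∈ Finset.range (m + 1), ((-1 : ℤ) ^ r) • (ePoly N r * hPoly N (m - r)) =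
      (0 : SR N) := by
  have hEH : (∏ i : Fin N, (1 - PowerSeries.C (MvPolynomial.X i) * PowerSeries.X)) *
      (∏ i : Fin N, geo (MvPolynomial.X i)) = 1 := by
    rw [← Finset.prod_mul_distrib]
    rw [Finset.prod_congr rfl fun i _ => one_sub_mul_geo (N := N) (MvPolynomial.X i)]
    simp
  have h := congrArg (PowerSeries.coeff m) hEH
  rw [PowerSeries.coeff_mul, Finset.Nat.sum_antidiagonal_eq_sum_range_succ_mk,
    PowerSeries.coeff_one, if_neg hm] at h
  rw [← h]
  refine Finset.sum_congr rfl fun r _ => ?_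
  rw [coeff_prod_one_sub, coeff_prod_geo, ← esymm_eq]
  rw [zsmul_eq_mul]
  push_cast
  ring

lemma hPoly_eq_hsymm (n : ℕ) : hPoly N n = MvPolynomial.hsymm (Fin N) ℤ n := by
  rw [hPoly, MvPolynomial.hsymm, Finset.sym_univ]
  rfl

lemma hPoly_zero : hPoly N 0 = 1 := by rw [hPoly_eq_hsymm, MvPolynomial.hsymm_zero]

lemma pd2_sumX (i j : Fin N) :
    MvPolynomial.pderiv i (MvPolynomial.pderiv j (∑ a, (MvPolynomial.X a : SR N))) = 0 := by
  classical
  rw [map_sum, map_sum]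
  refine Finset.sum_eq_zero fun a _ => ?_
  rw [MvPolynomial.pderiv_X]
  rcases eq_or_ne a j with rfl | h
  · rw [Pi.single_eq_same]; simp [MvPolynomial.pderiv_one]
  · rw [Pi.single_eq_of_ne h]; simp

lemma pd2_e0 (i j : Fin N) :
    MvPolynomial.pderiv i (MvPolynomial.pderiv j (ePoly N 0)) = 0 := by
  rw [ePoly, MvPolynomial.esymm_zero]; simp [MvPolynomial.pderiv_one]

lemma pd2_e1 (i j : Fin N) :
    MvPolynomial.pderiv i (MvPolynomial.pderiv j (ePoly N 1)) = 0 := by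
  rw [ePoly, MvPolynomial.esymm_one]; exact pd2_sumX i j

lemma pd2_h0 (i j : Fin N) :
    MvPolynomial.pderiv i (MvPolynomial.pderiv j (hPoly N 0)) = 0 := by
  rw [hPoly_zero]; simp [MvPolynomial.pderiv_one]

lemma pd2_h1 (i j : Fin N) :
    MvPolynomial.pderiv i (MvPolynomial.pderiv j (hPoly N 1)) = 0 := by
  rw [hPoly_eq_hsymm, MvPolynomial.hsymm_one]; exact pd2_sumX i j

open MvPolynomial in
lemma lemQ (i j : Fin N) (n : ℕ) :
    ∑ r ∈ Finset.range (n + 1), ((-1 : ℤ) ^ r) •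
      (pderiv i (pderiv j (ePoly N (r + 2))) * hPoly N (n - r)
        - pderiv i (hPoly N (n - r + 1)) * pderiv j (ePoly N (r + 1))
        - pderiv i (ePoly N (r + 1)) * pderiv j (hPoly N (n - r + 1))
        + ePoly N r * pderiv i (pderiv j (hPoly N (n - r + 2)))) = 0 := by
  have h0 := congrArg (fun p => pderiv i (pderiv j p)) (lemA (N := N) (n + 2) (by omega))
  simp only [map_sum, map_zsmul, map_zero] at h0
  -- expand the double derivative of the product
  have hexp : ∀ r, pderiv i (pderiv j (ePoly N r * hPoly N (n + 2 - r))) =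
      pderiv i (pderiv j (ePoly N r)) * hPoly N (n + 2 - r)
        + pderiv j (ePoly N r) * pderiv i (hPoly N (n + 2 - r))
        + pderiv i (ePoly N r) * pderiv j (hPoly N (n + 2 - r))
        + ePoly N r * pderiv i (pderiv j (hPoly N (n + 2 - r))) := by
    intro r
    rw [pderiv_mul, map_add, pderiv_mul, pderiv_mul]
    ring
  simp only [hexp, smul_add, Finset.sum_add_distrib] at h0
  -- the four sums
  set S1 := ∑ r ∈ Finset.range (n + 3),
    ((-1 : ℤ) ^ r) • (pderiv i (pderiv j (ePoly N r)) * hPoly N (n + 2 - r)) with hS1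
  set S2 := ∑ r ∈ Finset.range (n + 3),
    ((-1 : ℤ) ^ r) • (pderiv j (ePoly N r) * pderiv i (hPoly N (n + 2 - r))) with hS2
  set S3 := ∑ r ∈ Finset.range (n + 3),
    ((-1 : ℤ) ^ r) • (pderiv i (ePoly N r) * pderiv j (hPoly N (n + 2 - r))) with hS3
  set S4 := ∑ r ∈ Finset.range (n + 3),
    ((-1 : ℤ) ^ r) • (ePoly N r * pderiv i (pderiv j (hPoly N (n + 2 - r)))) with hS4
  have hT1 : S1 = ∑ r ∈ Finset.range (n + 1),
      ((-1 : ℤ) ^ r) • (pderiv i (pderiv j (ePoly N (r + 2))) * hPoly N (n - r)) := by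
    rw [hS1, Finset.sum_range_succ', Finset.sum_range_succ']
    rw [pd2_e0, pd2_e1]
    simp only [zero_mul, smul_zero, add_zero]
    refine Finset.sum_congr rfl fun r hr => ?_
    have : n + 2 - (r + 1 + 1) = n - r := by omega
    rw [this]
    have : (-1 : ℤ) ^ (r + 1 + 1) = (-1) ^ r := by ring
    rw [this]
  have hT2 : S2 = -∑ r ∈ Finset.range (n + 1),
      ((-1 : ℤ) ^ r) • (pderiv i (hPoly N (n - r + 1)) * pderiv j (ePoly N (r + 1))) := by
    rw [hS2, Finset.sum_range_succ']
    rw [ePoly, MvPolynomial.esymm_zero, pderiv_one, zero_mul, smul_zero, add_zero,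
      Finset.sum_range_succ]
    have hlast : n + 2 - (n + 1 + 1) = 0 := by omega
    rw [hlast, hPoly_zero, pderiv_one, mul_zero, smul_zero, add_zero, ← Finset.sum_neg_distrib]
    refine Finset.sum_congr rfl fun r hr => ?_
    have hr' : r < n + 1 := Finset.mem_range.1 hr
    have h1 : n + 2 - (r + 1) = n - r + 1 := by omega
    rw [h1, ← neg_smul]
    have h2 : (-1 : ℤ) ^ (r + 1) = -(-1) ^ r := by ring
    rw [h2, mul_comm]
  have hT3 : S3 = -∑ r ∈ Finset.range (n + 1),
      ((-1 : ℤ) ^ r) • (pderiv i (ePoly N (r + 1)) * pderiv j (hPoly N (n - r + 1))) := by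
    rw [hS3, Finset.sum_range_succ']
    rw [ePoly, MvPolynomial.esymm_zero, pderiv_one, zero_mul, smul_zero, add_zero,
      Finset.sum_range_succ]
    have hlast : n + 2 - (n + 1 + 1) = 0 := by omega
    rw [hlast, hPoly_zero, pderiv_one, mul_zero, smul_zero, add_zero, ← Finset.sum_neg_distrib]
    refine Finset.sum_congr rfl fun r hr => ?_
    have hr' : r < n + 1 := Finset.mem_range.1 hr
    have h1 : n + 2 - (r + 1) = n - r + 1 := by omega
    rw [h1, ← neg_smul]
    have h2 : (-1 : ℤ) ^ (r + 1) = -(-1) ^ r := by ring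
    rw [h2]
  have hT4 : S4 = ∑ r ∈ Finset.range (n + 1),
      ((-1 : ℤ) ^ r) • (ePoly N r * pderiv i (pderiv j (hPoly N (n - r + 2)))) := by
    rw [hS4, Finset.sum_range_succ, Finset.sum_range_succ]
    have e1 : n + 2 - (n + 1) = 1 := by omega
    have e2 : n + 2 - (n + 2) = 0 := by omega
    rw [e1, e2, pd2_h0, pd2_h1, mul_zero, smul_zero, mul_zero, smul_zero, add_zero, add_zero]
    refine Finset.sum_congr rfl fun r hr => ?_
    have hr' : r < n + 1 := Finset.mem_range.1 hr
    have h1 : n + 2 - r = n - r + 2 := by omega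
    rw [h1]
  have hsum : S1 + S2 + S3 + S4 = 0 := by
    simpa only [smul_add] using h0
  calc ∑ r ∈ Finset.range (n + 1), ((-1 : ℤ) ^ r) •
      (pderiv i (pderiv j (ePoly N (r + 2))) * hPoly N (n - r)
        - pderiv i (hPoly N (n - r + 1)) * pderiv j (ePoly N (r + 1))
        - pderiv i (ePoly N (r + 1)) * pderiv j (hPoly N (n - r + 1))
        + ePoly N r * pderiv i (pderiv j (hPoly N (n - r + 2))))
      = S1 + S2 + S3 + S4 := by
        rw [hT1, hT2, hT3, hT4]
        rw [← Finset.sum_neg_distrib, ← Finset.sum_neg_distrib,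
          ← Finset.sum_add_distrib, ← Finset.sum_add_distrib, ← Finset.sum_add_distrib]
        refine Finset.sum_congr rfl fun r _ => ?_
        simp only [smul_add, smul_sub]
        abel
    _ = 0 := hsum

section
variable [Ring R] [Algebra (MvPolynomial (Fin N) ℤ) R]

lemma lift'_mul (a b : SR N) : (lift' (a * b) : R) = lift' a * lift' b :=
  map_mul (algebraMap (SR N) R) a b

lemma swapLift (a : SR N) (y : R) : (lift' a : R) * y = y * lift' a :=
  Algebra.commutes a y

lemma lift'_zsmul (z : ℤ) (p : SR N) : (lift' (z • p) : R) = z • (lift' p : R) :=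
  map_zsmul (algebraMap (SR N) R) z p

lemma aux1 (x y : R) (a b : SR N) :
    (x * lift' a) * (y * lift' b) = (x * y) * lift' (a * b) := by
  have h : lift' a * (y * lift' b) = y * (lift' a * lift' b) := by
    rw [← mul_assoc, swapLift, mul_assoc]
  calc (x * lift' a) * (y * lift' b) = x * (lift' a * (y * lift' b)) := by rw [mul_assoc]
    _ = x * (y * (lift' a * lift' b)) := by rw [h]
    _ = (x * y) * lift' (a * b) := by rw [← mul_assoc, lift'_mul]

lemma lift'_sub (a b : SR N) : (lift' (a - b) : R) = lift' a - lift' b :=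
  map_sub (algebraMap (SR N) R) a b

lemma lift'_add (a b : SR N) : (lift' (a + b) : R) = lift' a + lift' b :=
  map_add (algebraMap (SR N) R) a b

lemma lift'_sum {s : Finset ℕ} (f : ℕ → SR N) :
    (lift' (∑ r ∈ s, f r) : R) = ∑ r ∈ s, lift' (f r) :=
  map_sum (algebraMap (SR N) R) f s

lemma lift'_zero : (lift' (0 : SR N) : R) = 0 := map_zero (algebraMap (SR N) R)

lemma aux2 (x : R) (a b : SR N) :
    (lift' a : R) * (x * lift' b) = x * lift' (a * b) := by
  rw [← mul_assoc, swapLift, mul_assoc, ← lift'_mul]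

end


/-- The `τ̄τ̲`-sector coefficient identity of the dual Cauchy relation
`H(t,τ̄,τ̲)·E(-t,-τ̄,-τ̲) = 1`:
`Σ_{r=0}^{n}(-1)ʳ (e̿ᵣ h_{n-r} - h̄_{n-r} e̲ᵣ - ēᵣ h̲_{n-r} + eᵣ h̿_{n-r}) = 0`,
where `ēₙ = ⟪d̄ e_{n+1}⟫`, `e̲ₙ = ⟪d̲ e_{n+1}⟫`, `e̿ₙ = ⟪d̄ d̲ e_{n+2}⟫`, and likewise for `h`. -/
theorem he_dual_bilined_identity
    [Ring R] [Algebra (MvPolynomial (Fin N) ℤ) R]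
    (φ θ : Fin N → R)
    (hφφ : ∀ i j, φ i * φ j = -(φ j * φ i))
    (hθθ : ∀ i j, θ i * θ j = -(θ j * θ i))
    (hφθ : ∀ i j, φ i * θ j = -(θ j * φ i)) (n : ℕ) :
    ∑ r ∈ Finset.range (n + 1),
      ((-1 : ℤ) ^ r) •
        (dOdd2 φ θ (ePoly N (r + 2)) * (lift' (hPoly N (n - r)) : R)
          - dOdd φ (hPoly N (n - r + 1)) * dOdd θ (ePoly N (r + 1))
          - dOdd φ (ePoly N (r + 1)) * dOdd θ (hPoly N (n - r + 1))
          + lift' (ePoly N r) * dOdd2 φ θ (hPoly N (n - r + 2))) = 0 := by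
  classical
  have key : ∀ r : ℕ,
      (dOdd2 φ θ (ePoly N (r + 2)) * (lift' (hPoly N (n - r)) : R)
        - dOdd φ (hPoly N (n - r + 1)) * dOdd θ (ePoly N (r + 1))
        - dOdd φ (ePoly N (r + 1)) * dOdd θ (hPoly N (n - r + 1))
        + lift' (ePoly N r) * dOdd2 φ θ (hPoly N (n - r + 2)))
      = ∑ i, ∑ j, φ i * θ j * lift'
          (MvPolynomial.pderiv i (MvPolynomial.pderiv j (ePoly N (r + 2))) * hPoly N (n - r)
            - MvPolynomial.pderiv i (hPoly N (n - r + 1)) *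
                MvPolynomial.pderiv j (ePoly N (r + 1))
            - MvPolynomial.pderiv i (ePoly N (r + 1)) *
                MvPolynomial.pderiv j (hPoly N (n - r + 1))
            + ePoly N r *
                MvPolynomial.pderiv i (MvPolynomial.pderiv j (hPoly N (n - r + 2)))) := by
    intro r
    have e1 : dOdd2 φ θ (ePoly N (r + 2)) * (lift' (hPoly N (n - r)) : R)
        = ∑ i, ∑ j, φ i * θ j * lift'
            (MvPolynomial.pderiv i (MvPolynomial.pderiv j (ePoly N (r + 2)))
              * hPoly N (n - r)) := by
      rw [dOdd2, Finset.sum_mul]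
      refine Finset.sum_congr rfl fun i _ => ?_
      rw [Finset.sum_mul]
      refine Finset.sum_congr rfl fun j _ => ?_
      rw [mul_assoc, ← lift'_mul]
    have e2 : dOdd φ (hPoly N (n - r + 1)) * dOdd θ (ePoly N (r + 1))
        = ∑ i, ∑ j, φ i * θ j * lift'
            (MvPolynomial.pderiv i (hPoly N (n - r + 1)) *
              MvPolynomial.pderiv j (ePoly N (r + 1))) := by
      rw [dOdd, dOdd, Finset.sum_mul]
      refine Finset.sum_congr rfl fun i _ => ?_
      rw [Finset.mul_sum]
      refine Finset.sum_congr rfl fun j _ => ?_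
      rw [aux1]
    have e3 : dOdd φ (ePoly N (r + 1)) * dOdd θ (hPoly N (n - r + 1))
        = ∑ i, ∑ j, φ i * θ j * lift'
            (MvPolynomial.pderiv i (ePoly N (r + 1)) *
              MvPolynomial.pderiv j (hPoly N (n - r + 1))) := by
      rw [dOdd, dOdd, Finset.sum_mul]
      refine Finset.sum_congr rfl fun i _ => ?_
      rw [Finset.mul_sum]
      refine Finset.sum_congr rfl fun j _ => ?_
      rw [aux1]
    have e4 : (lift' (ePoly N r) : R) * dOdd2 φ θ (hPoly N (n - r + 2))
        = ∑ i, ∑ j, φ i * θ j * lift'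
            (ePoly N r *
              MvPolynomial.pderiv i (MvPolynomial.pderiv j (hPoly N (n - r + 2)))) := by
      rw [dOdd2, Finset.mul_sum]
      refine Finset.sum_congr rfl fun i _ => ?_
      rw [Finset.mul_sum]
      refine Finset.sum_congr rfl fun j _ => ?_
      rw [aux2]
    rw [e1, e2, e3, e4, ← Finset.sum_sub_distrib, ← Finset.sum_sub_distrib,
      ← Finset.sum_add_distrib]
    refine Finset.sum_congr rfl fun i _ => ?_
    rw [← Finset.sum_sub_distrib, ← Finset.sum_sub_distrib, ← Finset.sum_add_distrib]
    refine Finset.sum_congr rfl fun j _ => ?_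
    rw [lift'_add, lift'_sub, lift'_sub, mul_add, mul_sub, mul_sub]
  simp only [key, Finset.smul_sum]
  rw [Finset.sum_comm]
  refine Finset.sum_eq_zero fun i _ => ?_
  rw [Finset.sum_comm]
  refine Finset.sum_eq_zero fun j _ => ?_
  have step : ∀ r ∈ Finset.range (n + 1), ((-1 : ℤ) ^ r) •
      (φ i * θ j * lift'
        (MvPolynomial.pderiv i (MvPolynomial.pderiv j (ePoly N (r + 2))) * hPoly N (n - r)
          - MvPolynomial.pderiv i (hPoly N (n - r + 1)) *
              MvPolynomial.pderiv j (ePoly N (r + 1))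
          - MvPolynomial.pderiv i (ePoly N (r + 1)) *
              MvPolynomial.pderiv j (hPoly N (n - r + 1))
          + ePoly N r *
              MvPolynomial.pderiv i (MvPolynomial.pderiv j (hPoly N (n - r + 2)))))
      = φ i * θ j * lift' (((-1 : ℤ) ^ r) •
        (MvPolynomial.pderiv i (MvPolynomial.pderiv j (ePoly N (r + 2))) * hPoly N (n - r)
          - MvPolynomial.pderiv i (hPoly N (n - r + 1)) *
              MvPolynomial.pderiv j (ePoly N (r + 1))
          - MvPolynomial.pderiv i (ePoly N (r + 1)) *
              MvPolynomial.pderiv j (hPoly N (n - r + 1))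
          + ePoly N r *
              MvPolynomial.pderiv i (MvPolynomial.pderiv j (hPoly N (n - r + 2))))) := by
    intro r _
    rw [lift'_zsmul, mul_smul_comm]
  rw [Finset.sum_congr rfl step, ← Finset.mul_sum, ← lift'_sum, lemQ, lift'_zero, mul_zero]
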